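/- Let R be a commutative ring, p a prime, α ≥ 1, and n a positive integer; set m = n·p^α. Then in the quotient ring R[X]/(Φ_m(X)), the radical of the ideal generated by p equals the radical of the ideal generated by the class of X^n − 1. -/

import Mathlib

open Polynomial

/-- For `m = n * p ^ α` with `p` prime and `α ≥ 1`, in `R[X]/(Φ_m)` the radical of the ideal
generated by `p` equals the radical of the ideal generated by the class of `X^n - 1`. -/
theorem stmt10 {R : Type*} [CommRing R] (p : ℕ) (hp : p.Prime) (α : ℕ) (hα : 1 ≤ α)
    (n : ℕ) (hn : 0 < n) :
    (Ideal.span {(p : R[X] ⧸ Ideal.span {cyclotomic (n * p ^ α) R})}).radical =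
      (Ideal.span {Ideal.Quotient.mk (Ideal.span {cyclotomic (n * p ^ α) R})
        ((X : R[X]) ^ n - 1)}).radical := by
  haveI : Fact p.Prime := ⟨hp⟩
  set m := n * p ^ α with hm
  set d := n * p ^ (α - 1) with hd
  have hdp : d * p = m := by
    rw [hd, hm, mul_assoc, ← pow_succ, Nat.sub_add_cancel hα]
  have hm0 : 0 < m := Nat.mul_pos hn (pow_pos hp.pos _)
  have hd0 : 0 < d := Nat.mul_pos hn (pow_pos hp.pos _)
  set I := Ideal.span {cyclotomic m R} with hI
  set mk := Ideal.Quotient.mk I with hmk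
  -- Direction 2 : p ∈ span {mk (X^n - 1)}
  have hdprop : d ∈ m.properDivisors := by
    refine Nat.mem_properDivisors.mpr ⟨⟨p, hdp.symm⟩, ?_⟩
    rw [← hdp]
    exact (Nat.lt_mul_iff_one_lt_right hd0).mpr hp.one_lt
  -- geometric sum
  set G : R[X] := ∑ i ∈ Finset.range p, X ^ (d * i) with hG
  have hGeq : ((X : R[X]) ^ d - 1) * G = X ^ m - 1 := by
    have := geom_sum_mul ((X : R[X]) ^ d) p
    rw [← pow_mul, hdp] at this
    rw [hG, mul_comm, ← this]
    congr 1
    exact Finset.sum_congr rfl fun i _ => by rw [← pow_mul]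
  have hΦG : cyclotomic m R ∣ G := by
    obtain ⟨c, hc⟩ := X_pow_sub_one_mul_cyclotomic_dvd_X_pow_sub_one_of_dvd R hdprop
    refine ⟨c, ?_⟩
    have hreg := (monic_X_pow_sub_C (1 : R) hd0.ne').isRegular.left
    apply hreg
    show ((X : R[X]) ^ d - C 1) * G = ((X : R[X]) ^ d - C 1) * (cyclotomic m R * c)
    rw [map_one, hGeq, hc, mul_assoc]
  have hXn : ((X : R[X]) ^ n - 1) ∣ G - (p : R[X]) := by
    have : G - (p : R[X]) = ∑ i ∈ Finset.range p, ((X : R[X]) ^ (d * i) - 1) := by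
      rw [Finset.sum_sub_distrib, Finset.sum_const, Finset.card_range, nsmul_eq_mul, mul_one]
    rw [this]
    refine Finset.dvd_sum fun i _ => ?_
    have : ((X : R[X]) ^ n - 1) ∣ ((X : R[X]) ^ n) ^ (p ^ (α - 1) * i) - 1 ^ (p ^ (α - 1) * i) := by
      exact sub_dvd_pow_sub_pow _ _ _
    simpa [← pow_mul, hd, mul_assoc] using this
  have hpmem : (p : R[X] ⧸ I) ∈ Ideal.span {mk ((X : R[X]) ^ n - 1)} := by
    have hG0 : mk G = 0 := by
      rw [Ideal.Quotient.eq_zero_iff_mem, hI, Ideal.mem_span_singleton]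
      exact hΦG
    obtain ⟨c, hc⟩ := hXn
    have : (p : R[X] ⧸ I) = - mk (G - (p : R[X])) := by
      rw [map_sub, hG0, map_natCast]; ring
    rw [this, hc, map_mul]
    exact neg_mem (Ideal.mul_mem_right _ _ (Ideal.subset_span rfl))
  -- Direction 1 : (mk (X^n-1))^(p^α) ∈ span {p}
  have hzint : ∃ q s : ℤ[X], ((X : ℤ[X]) ^ n - 1) ^ (p ^ α) =
      cyclotomic m ℤ * q + C (p : ℤ) * s := by
    set Φ := cyclotomic m ℤ with hΦ
    set F := ((X : ℤ[X]) ^ n - 1) ^ (p ^ α) with hF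
    have hmon : Φ.Monic := cyclotomic.monic m ℤ
    have hdivmod : F %ₘ Φ + Φ * (F /ₘ Φ) = F := modByMonic_add_div F Φ
    have hmap : (F %ₘ Φ).map (Int.castRingHom (ZMod p)) = 0 := by
      rw [map_modByMonic _ hmon, (modByMonic_eq_zero_iff_dvd (hmon.map _)).mpr]
      rw [map_cyclotomic]
      have : F.map (Int.castRingHom (ZMod p)) = (X : (ZMod p)[X]) ^ m - 1 := by
        rw [hF, Polynomial.map_pow, Polynomial.map_sub, Polynomial.map_pow,
          Polynomial.map_X, Polynomial.map_one, sub_pow_char_pow, one_pow, ← pow_mul, hm]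
      rw [this]
      exact cyclotomic.dvd_X_pow_sub_one m (ZMod p)
    have hCdvd : C (p : ℤ) ∣ F %ₘ Φ := by
      rw [C_dvd_iff_dvd_coeff]
      intro i
      have := Polynomial.ext_iff.mp hmap i
      rwa [coeff_map, coeff_zero, Int.coe_castRingHom,
        ZMod.intCast_zmod_eq_zero_iff_dvd] at this
      
    obtain ⟨s, hs⟩ := hCdvd
    exact ⟨F /ₘ Φ, s, by rw [← hs, add_comm]; exact hdivmod.symm⟩
  have hpow : (mk ((X : R[X]) ^ n - 1)) ^ (p ^ α) ∈ Ideal.span {(p : R[X] ⧸ I)} := by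
    obtain ⟨q, s, hqs⟩ := hzint
    have := congrArg (fun f => mk (f.map (Int.castRingHom R))) hqs
    simp only [Polynomial.map_add, Polynomial.map_mul, Polynomial.map_pow, Polynomial.map_sub,
      Polynomial.map_X, Polynomial.map_one, map_cyclotomic, Polynomial.map_C, map_add, map_mul,
      map_pow] at this
    have hΦ0 : mk (cyclotomic m R) = 0 := by
      rw [Ideal.Quotient.eq_zero_iff_mem, hI]
      exact Ideal.subset_span rfl
    rw [map_sub, map_pow, map_one] at this ⊢
    rw [this, hΦ0, zero_mul, zero_add]
    have hC : mk (C ((Int.castRingHom R) ((p : ℕ) : ℤ))) = (p : R[X] ⧸ I) := by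
      rw [eq_intCast (Int.castRingHom R),
        show (((p : ℕ) : ℤ) : R) = ((p : ℕ) : R) by push_cast; ring,
        Polynomial.C_eq_natCast, map_natCast]
    rw [hC]
    exact Ideal.mul_mem_right _ _ (Ideal.subset_span rfl)
  apply le_antisymm <;> rw [Ideal.radical_le_radical_iff, Ideal.span_le,
    Set.singleton_subset_iff]
  · exact Ideal.le_radical hpmem
  · exact ⟨p ^ α, hpow⟩
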